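/- (Unicity of generators.) Let A be a totally ordered abelian group written additively, A⁺ its submonoid of non-positive elements together with a formal bottom element, and let K be a convex A⁺-submodule of A (with formal -∞) that is the convex closure of a finitely generated A⁺-submodule. Then K has a unique minimal generating set as a convex A⁺-submodule: if (X_i)_{i∈I} and (Y_j)_{j∈J} are both minimal sets of generators of K under taking A⁺-translates and convex combinations with natural coefficients (n·x = Σ n_j y_j with n = Σ n_j), then {X_i} = {Y_j}. -/

import Mathlib

/-- A convex `A⁺`-submodule of `A_∨ = A ∪ {-∞}` (for `A` a totally ordered abelian
group, `A⁺` its non-positive elements together with the bottom element): a subset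
containing `⊥`, closed under translation by non-positive elements, and closed under
convexity: if `n • x = Σ nⱼ • yⱼ` with the `yⱼ ∈ K` and `n = Σ nⱼ ≥ 1`, then
`x ∈ K`. -/
def IsConvexSub (A : Type) [AddCommGroup A] [LinearOrder A] [IsOrderedAddMonoid A] (K : Set (WithBot A)) :
    Prop :=
  ⊥ ∈ K ∧
  (∀ h : A, h ≤ 0 → ∀ x ∈ K, (h : WithBot A) + x ∈ K) ∧
  (∀ (x : WithBot A) (k : ℕ) (m : Fin k → ℕ) (y : Fin k → WithBot A),
    (∀ j, y j ∈ K) → 1 ≤ ∑ j, m j →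
    (∑ j, m j) • x = ∑ j, m j • y j → x ∈ K)

/-- The convex `A⁺`-closure of a subset: the smallest convex `A⁺`-submodule
containing it. -/
def convClosure (A : Type) [AddCommGroup A] [LinearOrder A] [IsOrderedAddMonoid A] (G : Set (WithBot A)) :
    Set (WithBot A) :=
  ⋂₀ {K | IsConvexSub A K ∧ G ⊆ K}

/-- **Unicity of generators.** Let `A` be a totally ordered abelian
group and `K` a convex `A⁺`-submodule of `A_∨` which is the convex closure of a
finitely generated `A⁺`-submodule.  Then `K` has a unique minimal generating set as
a convex `A⁺`-submodule: any two minimal generating sets coincide. -/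
lemma isConvexSub_lower (A : Type) [AddCommGroup A] [LinearOrder A] [IsOrderedAddMonoid A] (G : Set (WithBot A)) :
    IsConvexSub A {x | x = ⊥ ∨ ∃ g ∈ G, x ≤ g} := by
  refine ⟨Or.inl rfl, ?_, ?_⟩
  · rintro h hh x (rfl | ⟨g, hg, hxg⟩)
    · left; simp
    · right
      refine ⟨g, hg, le_trans (le_trans ?_ (le_of_eq (zero_add x))) hxg⟩
      gcongr
      exact_mod_cast hh
  · intro x k m y hy hm heq
    cases x with
    | bot => exact Or.inl rfl
    | coe a =>
      right
      -- effective indices have y j ≠ ⊥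
      have hne : ∀ j, m j ≠ 0 → y j ≠ ⊥ := by
        intro j hj hbot
        have hsum : ∑ j, m j • y j = ⊥ := by
          rw [WithBot.sum_eq_bot_iff]
          refine ⟨j, Finset.mem_univ j, ?_⟩
          rw [hbot]
          cases' Nat.exists_eq_succ_of_ne_zero hj with p hp
          rw [hp, succ_nsmul]
          simp
        rw [hsum, ← WithBot.coe_nsmul] at heq
        exact WithBot.coe_ne_bot heq
      set b : Fin k → A := fun j => WithBot.unbotD a (y j) with hb
      have hby : ∀ j, m j • y j = ((m j • b j : A) : WithBot A) := by
        intro j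
        by_cases hj : m j = 0
        · rw [hj, zero_nsmul, zero_nsmul, WithBot.coe_zero]
        · have := hne j hj
          rw [WithBot.coe_nsmul]
          congr 1
          rw [hb]
          simp only []
          cases hyj : y j with
          | bot => exact absurd hyj this
          | coe c => simp [hyj]
      have heqA : (∑ j, m j) • a = ∑ j, m j • b j := by
        have : ((∑ j, m j) • (a : WithBot A)) = ((∑ j, m j • b j : A) : WithBot A) := by
          rw [heq, WithBot.coe_sum]
          exact Finset.sum_congr rfl (fun j _ => hby j)
        rw [← WithBot.coe_nsmul] at this
        exact_mod_cast this
      -- find effective j with a ≤ b j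
      by_contra hcon
      push_neg at hcon
      have hlt : ∀ j, m j ≠ 0 → b j < a := by
        intro j hj
        by_contra hge
        push_neg at hge
        have hybj : y j = (b j : WithBot A) := by
          cases hyj : y j with
          | bot => exact absurd hyj (hne j hj)
          | coe c => simp [hb, hyj]
        rcases hy j with hj2 | ⟨g, hg, hyg⟩
        · exact hne j hj hj2
        · rw [hybj] at hyg
          exact absurd (le_trans (show (a : WithBot A) ≤ (b j : WithBot A) by
            exact_mod_cast hge) hyg) (not_le.mpr (hcon g hg))
      obtain ⟨j0, _, hj0⟩ := Finset.exists_ne_zero_of_sum_ne_zero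
        (s := Finset.univ) (f := m) (by omega)
      have hstrict : ∑ j, m j • b j < ∑ j, m j • a := by
        apply Finset.sum_lt_sum
        · intro j _
          by_cases hj : m j = 0
          · rw [hj, zero_nsmul, zero_nsmul]
          · exact nsmul_le_nsmul_right (le_of_lt (hlt j hj)) _
        · exact ⟨j0, Finset.mem_univ j0, nsmul_lt_nsmul_right hj0 (hlt j0 hj0)⟩
      rw [Finset.sum_nsmul_assoc, ← heqA] at hstrict
      exact lt_irrefl _ hstrict

lemma convClosure_eq (A : Type) [AddCommGroup A] [LinearOrder A] [IsOrderedAddMonoid A] (G : Set (WithBot A)) :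
    convClosure A G = {x | x = ⊥ ∨ ∃ g ∈ G, x ≤ g} := by
  apply subset_antisymm
  · exact Set.sInter_subset_of_mem ⟨isConvexSub_lower A G,
      fun g hg => Or.inr ⟨g, hg, le_refl g⟩⟩
  · rintro x (rfl | ⟨g, hg, hxg⟩) K' ⟨⟨hbot, htrans, _⟩, hGK⟩
    · exact hbot
    · cases x with
      | bot => exact hbot
      | coe a =>
        cases g with
        | bot => exact absurd hxg (by simp)
        | coe c =>
          have hac : a ≤ c := by exact_mod_cast hxg
          have := htrans (a - c) (sub_nonpos.mpr hac) _ (hGK hg)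
          have hcoe : ((a - c : A) : WithBot A) + (c : WithBot A) = (a : WithBot A) := by
            rw [← WithBot.coe_add, sub_add_cancel]
          rwa [hcoe] at this

theorem stmt19 (A : Type) [AddCommGroup A] [LinearOrder A] [IsOrderedAddMonoid A] (K : Set (WithBot A))
    (hK : IsConvexSub A K) (F : Finset (WithBot A))
    (hfg : K = convClosure A (↑F : Set (WithBot A)))
    (X Y : Set (WithBot A))
    (hXgen : convClosure A X = K) (hXmin : ∀ X' ⊂ X, convClosure A X' ≠ K)
    (hYgen : convClosure A Y = K) (hYmin : ∀ Y' ⊂ Y, convClosure A Y' ≠ K) :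
    X = Y := by
  by_cases hc : ∀ x ∈ K, x = (⊥ : WithBot A)
  · -- K = {⊥}, both X and Y are empty
    have hKbot : K = {(⊥ : WithBot A)} := by
      apply subset_antisymm
      · intro x hx; exact hc x hx
      · rintro x rfl; exact hK.1
    have hempty : convClosure A (∅ : Set (WithBot A)) = K := by
      rw [convClosure_eq, hKbot]
      ext x; simp
    have key : ∀ Z : Set (WithBot A), (∀ Z' ⊂ Z, convClosure A Z' ≠ K) → Z = ∅ := by
      intro Z hmin
      by_contra hne
      exact hmin ∅ (Set.ssubset_iff_of_subset (Set.empty_subset Z) |>.mpr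
        (Set.nonempty_iff_ne_empty.mpr hne |>.imp (fun x hx => ⟨hx, fun h => h.elim⟩)))
        hempty
    rw [key X hXmin, key Y hYmin]
  · push_neg at hc
    obtain ⟨a, haK, hane⟩ := hc
    have haF : ∃ g ∈ F, a ≤ g := by
      have := haK
      rw [hfg, convClosure_eq] at this
      rcases this with h | ⟨g, hg, hag⟩
      · exact absurd h hane
      · exact ⟨g, hg, hag⟩
    obtain ⟨g1, hg1F, hag1⟩ := haF
    have hFne : F.Nonempty := ⟨g1, hg1F⟩
    set g0 := F.max' hFne with hg0
    have hg0F : g0 ∈ F := F.max'_mem hFne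
    have hle : ∀ g ∈ F, g ≤ g0 := fun g hg => F.le_max' g hg
    have hg0ne : g0 ≠ ⊥ := by
      intro h
      apply hane
      have := le_trans hag1 (hle g1 hg1F)
      rw [h] at this
      exact le_bot_iff.mp this
    have hKeq : K = {x | x ≤ g0} := by
      rw [hfg, convClosure_eq]
      ext x
      simp only [Set.mem_setOf_eq]
      constructor
      · rintro (rfl | ⟨g, hg, hxg⟩)
        · exact bot_le
        · exact le_trans hxg (hle g hg)
      · intro hx
        exact Or.inr ⟨g0, hg0F, hx⟩
    have hsingle : convClosure A {g0} = K := by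
      rw [convClosure_eq, hKeq]
      ext x
      simp only [Set.mem_setOf_eq, Set.mem_singleton_iff, exists_eq_left]
      constructor
      · rintro (rfl | h)
        · exact bot_le
        · exact h
      · exact Or.inr
    have key : ∀ Z : Set (WithBot A), convClosure A Z = K →
        (∀ Z' ⊂ Z, convClosure A Z' ≠ K) → Z = {g0} := by
      intro Z hgen hmin
      have hg0Z : g0 ∈ Z := by
        have hg0K : g0 ∈ K := by
          rw [hKeq]
          exact le_refl g0
        have := hg0K
        rw [← hgen, convClosure_eq] at this
        rcases this with h | ⟨z, hz, hgz⟩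
        · exact absurd h hg0ne
        · have hzK : z ∈ K := by
            rw [← hgen, convClosure_eq]
            exact Or.inr ⟨z, hz, le_refl z⟩
          rw [hKeq] at hzK
          have : z = g0 := le_antisymm hzK hgz
          rwa [← this]
      by_contra hne
      exact hmin {g0} (HasSubset.Subset.ssubset_of_ne
        (Set.singleton_subset_iff.mpr hg0Z) (fun h => hne h.symm)) hsingle
    rw [key X hXgen hXmin, key Y hYgen hYmin]
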